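/- Let a_1, a_2 be positive integers with gcd(a_1, a_2) = 1 such that a_1 ≡ 1 (mod 3) and a_2 ≡ 2 (mod 3). Then the quotient ⟨a_1, a_2⟩/3 equals the numerical semigroup generated by a_1, a_2, and (a_1 + a_2)/3. -/

import Mathlib

/-- Corollary 3.4 (second part): for coprime `a₁ ≡ 1`, `a₂ ≡ 2 (mod 3)`,
`⟨a₁, a₂⟩/3 = ⟨a₁, a₂, (a₁+a₂)/3⟩`. -/
theorem quotient_three_mixed_residue
    (a₁ a₂ : ℕ) (h₁ : 0 < a₁) (h₂ : 0 < a₂) (hgcd : Nat.gcd a₁ a₂ = 1)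
    (hmod₁ : a₁ % 3 = 1) (hmod₂ : a₂ % 3 = 2) :
    {m : ℕ | 3 * m ∈ AddSubmonoid.closure ({a₁, a₂} : Set ℕ)} =
      ↑(AddSubmonoid.closure ({a₁, a₂, (a₁ + a₂) / 3} : Set ℕ)) := by
  have hdvd : 3 ∣ a₁ + a₂ := by omega
  set c := (a₁ + a₂) / 3 with hcdef
  have hc : 3 * c = a₁ + a₂ := Nat.mul_div_cancel' hdvd
  have ha₁ : a₁ ∈ AddSubmonoid.closure ({a₁, a₂, c} : Set ℕ) :=
    AddSubmonoid.subset_closure (by simp)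
  have ha₂ : a₂ ∈ AddSubmonoid.closure ({a₁, a₂, c} : Set ℕ) :=
    AddSubmonoid.subset_closure (by simp)
  have hcm : c ∈ AddSubmonoid.closure ({a₁, a₂, c} : Set ℕ) :=
    AddSubmonoid.subset_closure (by simp)
  have hb₁ : a₁ ∈ AddSubmonoid.closure ({a₁, a₂} : Set ℕ) :=
    AddSubmonoid.subset_closure (by simp)
  have hb₂ : a₂ ∈ AddSubmonoid.closure ({a₁, a₂} : Set ℕ) :=
    AddSubmonoid.subset_closure (by simp)
  ext m
  simp only [Set.mem_setOf_eq, SetLike.mem_coe]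
  constructor
  · intro hm
    obtain ⟨x, y, hxy⟩ := (AddSubmonoid.mem_closure_pair a₁ a₂ (3 * m)).mp hm
    simp only [smul_eq_mul] at hxy
    obtain ⟨p, hp⟩ : ∃ p, a₁ = 3 * p + 1 := ⟨a₁ / 3, by omega⟩
    obtain ⟨q, hq⟩ : ∃ q, a₂ = 3 * q + 2 := ⟨a₂ / 3, by omega⟩
    have heq : 3 * m = 3 * (x * p + y * q) + (x + 2 * y) := by
      rw [← hxy, hp, hq]; ring
    set t := x * p + y * q with ht
    have hmod : (x + 2 * y) % 3 = 0 := by omega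
    rcases le_or_gt y x with h | h
    · obtain ⟨k, hk⟩ : ∃ k, x = y + 3 * k := by
        refine ⟨(x - y) / 3, ?_⟩
        omega
      have hm' : m = y * c + k * a₁ := by
        have h3 : 3 * (y * c + k * a₁) = x * a₁ + y * a₂ := by
          calc 3 * (y * c + k * a₁) = y * (3 * c) + 3 * (k * a₁) := by ring
            _ = y * (a₁ + a₂) + 3 * (k * a₁) := by rw [hc]
            _ = x * a₁ + y * a₂ := by rw [hk]; ring
        exact (Nat.eq_of_mul_eq_mul_left (by norm_num) (h3.trans hxy)).symm
      rw [hm']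
      have t1 := AddSubmonoid.nsmul_mem _ hcm y
      have t2 := AddSubmonoid.nsmul_mem _ ha₁ k
      simp only [smul_eq_mul] at t1 t2
      exact add_mem t1 t2
    · obtain ⟨k, hk⟩ : ∃ k, y = x + 3 * k := by
        refine ⟨(y - x) / 3, ?_⟩
        omega
      have hm' : m = x * c + k * a₂ := by
        have h3 : 3 * (x * c + k * a₂) = x * a₁ + y * a₂ := by
          calc 3 * (x * c + k * a₂) = x * (3 * c) + 3 * (k * a₂) := by ring
            _ = x * (a₁ + a₂) + 3 * (k * a₂) := by rw [hc]
            _ = x * a₁ + y * a₂ := by rw [hk]; ring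
        exact (Nat.eq_of_mul_eq_mul_left (by norm_num) (h3.trans hxy)).symm
      rw [hm']
      have t1 := AddSubmonoid.nsmul_mem _ hcm x
      have t2 := AddSubmonoid.nsmul_mem _ ha₂ k
      simp only [smul_eq_mul] at t1 t2
      exact add_mem t1 t2
  · intro hm
    induction hm using AddSubmonoid.closure_induction with
    | mem z hz =>
        rcases hz with rfl | rfl | rfl
        · have : 3 * z = z + z + z := by ring
          rw [this]; exact add_mem (add_mem hb₁ hb₁) hb₁
        · have : 3 * z = z + z + z := by ring
          rw [this]; exact add_mem (add_mem hb₂ hb₂) hb₂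
        · rw [hc]; exact add_mem hb₁ hb₂
    | zero => simpa using (AddSubmonoid.closure ({a₁, a₂} : Set ℕ)).zero_mem
    | add x y _ _ hx hy =>
        have : 3 * (x + y) = 3 * x + 3 * y := by ring
        rw [this]; exact add_mem hx hy
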